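/- arXiv:1503.07201 — 2 statements merged into one kernel-verified Lean document; each statement's English description precedes it below -/
import Mathlib

section
/- Let K ⊂ ℝ² be compact with d = diam(K) > 0, let A ≥ 0, and let a : ℝ² → ℝ be measurable with |a(y)| ≤ A for all y and a(y) = 0 for y ∉ K. Let f : ℝ² → [0,∞) be measurable, and suppose there are x̄ ∈ ℝ², R > 0 and c > 0 such that the open ball B(x̄, R) is contained in K and f(y) ≥ c for all y ∈ B(x̄, R). Then for every x ∈ K, M[a,f](x) ≥ e^{−dA} · c · πR² / d. -/
open MeasureTheory Real Set
open scoped ENNReal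

/-- The unit direction vector in `ℝ²` with angle `φ`; integrating over `φ ∈ (0, 2π]`
realizes integration over the unit circle `S¹` with its arclength measure. -/
noncomputable def dir (φ : ℝ) : EuclideanSpace ℝ (Fin 2) :=
  (WithLp.equiv 2 (Fin 2 → ℝ)).symm ![Real.cos φ, Real.sin φ]

/-- The averaging operator
`M[a,f](x) = ∫_{S¹} ∫₀^∞ f(x+tθ) exp(−∫₀^t a(x+sθ) ds) dt dθ`,
here as a lower Lebesgue integral (the integrand is nonnegative when `f ≥ 0`). -/
noncomputable def Mop (a f : EuclideanSpace ℝ (Fin 2) → ℝ)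
    (x : EuclideanSpace ℝ (Fin 2)) : ℝ≥0∞ :=
  ∫⁻ φ in Set.Ioc 0 (2 * π), ∫⁻ t in Set.Ioi (0 : ℝ),
    ENNReal.ofReal (f (x + t • dir φ) * Real.exp (-∫ s in (0:ℝ)..t, a (x + s • dir φ)))

theorem dir_norm (φ : ℝ) : ‖dir φ‖ = 1 := by
  simp [dir, EuclideanSpace.norm_eq, Fin.sum_univ_two]

/-- The identification of `ℝ²` (Euclidean) with `ℝ × ℝ`. -/
noncomputable def eE : EuclideanSpace ℝ (Fin 2) ≃ᵐ ℝ × ℝ :=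
  (MeasurableEquiv.toLp 2 (Fin 2 → ℝ)).symm.trans (MeasurableEquiv.finTwoArrow)

theorem eE_vol : MeasurePreserving eE volume volume :=
  (volume_preserving_finTwoArrow ℝ).comp (EuclideanSpace.volume_preserving_symm_measurableEquiv_toLp (Fin 2))

theorem eE_add (x : EuclideanSpace ℝ (Fin 2)) (t φ : ℝ) :
    eE (x + t • dir φ) = eE x + (t * Real.cos φ, t * Real.sin φ) := by
  simp [eE, dir, MeasurableEquiv.finTwoArrow, Prod.ext_iff]
  constructor <;> rfl

/-- Lebesgue-integral version of the polar-coordinates change of variables. -/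
theorem lintegral_comp_polarCoord_symm' (g : ℝ × ℝ → ℝ≥0∞) :
    ∫⁻ p in polarCoord.target, ENNReal.ofReal p.1 * g (polarCoord.symm p) = ∫⁻ p, g p := by
  set B : ℝ × ℝ → ℝ × ℝ →L[ℝ] ℝ × ℝ := fun p =>
    LinearMap.toContinuousLinearMap (Matrix.toLin (Module.Basis.finTwoProd ℝ) (Module.Basis.finTwoProd ℝ)
      !![cos p.2, -p.1 * sin p.2; sin p.2, p.1 * cos p.2])
  have A : ∀ p ∈ polarCoord.target, HasFDerivWithinAt polarCoord.symm (B p) polarCoord.target p :=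
    fun p _ => (hasFDerivAt_polarCoord_symm p).hasFDerivWithinAt
  have B_det : ∀ p, (B p).det = p.1 := by
    intro p
    conv_rhs => rw [← one_mul p.1, ← cos_sq_add_sin_sq p.2]
    simp only [B, neg_mul, LinearMap.det_toContinuousLinearMap, LinearMap.det_toLin,
      Matrix.det_fin_two_of, sub_neg_eq_add]
    ring
  have hinj : Set.InjOn polarCoord.symm polarCoord.target := by
    have := polarCoord.symm.injOn
    rwa [OpenPartialHomeomorph.symm_source] at this
  symm
  calc
    ∫⁻ p, g p = ∫⁻ p in polarCoord.source, g p := by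
      rw [← setLIntegral_univ]
      exact setLIntegral_congr polarCoord_source_ae_eq_univ.symm
    _ = ∫⁻ p in polarCoord.symm '' polarCoord.target, g p := by
      rw [polarCoord.symm_image_target_eq_source]
    _ = ∫⁻ p in polarCoord.target, ENNReal.ofReal |(B p).det| * g (polarCoord.symm p) :=
      lintegral_image_eq_lintegral_abs_det_fderiv_mul volume
        (polarCoord.open_target.measurableSet) A hinj g
    _ = ∫⁻ p in polarCoord.target, ENNReal.ofReal p.1 * g (polarCoord.symm p) := by
      apply setLIntegral_congr_fun polarCoord.open_target.measurableSet
      intro p hp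
      beta_reduce
      rw [B_det, abs_of_pos hp.1]

/-- Polar-coordinates formula centered at `x` for the angular parametrization `dir`. -/
theorem polar_lintegral (g : EuclideanSpace ℝ (Fin 2) → ℝ≥0∞) (hg : Measurable g)
    (x : EuclideanSpace ℝ (Fin 2)) :
    ∫⁻ φ in Ioc 0 (2*π), ∫⁻ t in Ioi (0:ℝ), ENNReal.ofReal t * g (x + t • dir φ)
      = ∫⁻ y, g y := by
  set p₀ : ℝ × ℝ := eE x with hp₀
  set G : ℝ × ℝ → ℝ≥0∞ := fun p => g (eE.symm p) with hG
  have hGm : Measurable G := hg.comp eE.symm.measurable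
  set H : ℝ × ℝ → ℝ≥0∞ := fun p => G (p₀ - p) with hH
  have hHm : Measurable H := hGm.comp (measurable_const.sub measurable_id)
  have key : ∀ t φ : ℝ, g (x + t • dir φ) = G (p₀ + (t * Real.cos φ, t * Real.sin φ)) := by
    intro t φ
    rw [hG]
    congr 1
    rw [hp₀, ← eE_add]
    exact (eE.symm_apply_apply _).symm
  calc
    ∫⁻ φ in Ioc 0 (2*π), ∫⁻ t in Ioi (0:ℝ), ENNReal.ofReal t * g (x + t • dir φ)
        = ∫⁻ φ in Ioc (-π) π, ∫⁻ t in Ioi (0:ℝ),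
            ENNReal.ofReal t * H (t * Real.cos φ, t * Real.sin φ) := by
      have h := (measurePreserving_add_right volume π).setLIntegral_comp_preimage_emb
        (measurableEmbedding_addRight π)
        (fun φ => ∫⁻ t in Ioi (0:ℝ), ENNReal.ofReal t * g (x + t • dir φ)) (Ioc 0 (2*π))
      rw [← h]
      have hset : (fun φ => φ + π) ⁻¹' Ioc 0 (2*π) = Ioc (-π) π := by
        ext φ
        simp only [mem_preimage, mem_Ioc]
        constructor <;> rintro ⟨h1, h2⟩ <;> constructor <;> linarith
      rw [hset]
      apply setLIntegral_congr_fun measurableSet_Ioc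
      intro φ _
      apply lintegral_congr
      intro t
      rw [key]
      congr 2
      simp [hH, Real.cos_add_pi, Real.sin_add_pi, Prod.ext_iff]
      constructor <;> ring
    _ = ∫⁻ φ in Ioo (-π) π, ∫⁻ t in Ioi (0:ℝ),
            ENNReal.ofReal t * H (t * Real.cos φ, t * Real.sin φ) := by
      rw [Measure.restrict_congr_set Ioo_ae_eq_Ioc]
    _ = ∫⁻ p in polarCoord.target, ENNReal.ofReal p.1 * H (polarCoord.symm p) := by
      rw [lintegral_lintegral_swap]
      · rw [polarCoord_target, Measure.volume_eq_prod, ← Measure.prod_restrict, lintegral_prod]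
        · rfl
        · exact ((ENNReal.measurable_ofReal.comp measurable_fst).mul
            (hHm.comp ((measurable_fst.mul (Real.measurable_cos.comp measurable_snd)).prodMk
              (measurable_fst.mul (Real.measurable_sin.comp measurable_snd))))).aemeasurable
      · exact ((ENNReal.measurable_ofReal.comp measurable_snd).mul
          (hHm.comp ((measurable_snd.mul (Real.measurable_cos.comp measurable_fst)).prodMk
            (measurable_snd.mul (Real.measurable_sin.comp measurable_fst))))).aemeasurable
    _ = ∫⁻ p, H p := lintegral_comp_polarCoord_symm' H
    _ = ∫⁻ p, G p :=
      (Measure.measurePreserving_sub_left volume p₀).lintegral_comp_emb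
        (MeasurableEquiv.subLeft p₀).measurableEmbedding G
    _ = ∫⁻ y, g y := (MeasurePreserving.symm eE eE_vol).lintegral_comp_emb
        eE.symm.measurableEmbedding g

/-- If `f ≥ c > 0` on a ball `B(x̄,R) ⊆ K` and `|a| ≤ A` with `a` supported in `K`,
`diam K = d`, then `M[a,f](x) ≥ e^{−dA} c π R² / d` for every `x ∈ K`. -/
theorem stmt3 (K : Set (EuclideanSpace ℝ (Fin 2))) (hK : IsCompact K)
    (d : ℝ) (hd : Metric.diam K = d) (hdpos : 0 < d)
    (A : ℝ) (hA0 : 0 ≤ A)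
    (a : EuclideanSpace ℝ (Fin 2) → ℝ) (hameas : Measurable a)
    (habd : ∀ y, |a y| ≤ A) (hasupp : ∀ y ∉ K, a y = 0)
    (f : EuclideanSpace ℝ (Fin 2) → ℝ) (hfmeas : Measurable f) (hf0 : ∀ y, 0 ≤ f y)
    (xbar : EuclideanSpace ℝ (Fin 2)) (R c : ℝ) (hR : 0 < R) (hc : 0 < c)
    (hball : Metric.ball xbar R ⊆ K)
    (hfball : ∀ y ∈ Metric.ball xbar R, c ≤ f y) :
    ∀ x ∈ K,
      ENNReal.ofReal (Real.exp (-(d * A)) * c * π * R ^ 2 / d) ≤ Mop a f x := by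
  intro x hx
  have hdist : ∀ (t φ : ℝ), 0 ≤ t → dist (x + t • dir φ) x = t := by
    intro t φ ht
    rw [dist_eq_norm, add_sub_cancel_left, norm_smul, dir_norm φ]
    simp [abs_of_nonneg ht]
  -- bound on the attenuation integral
  have hI : ∀ (φ t : ℝ), 0 < t → ∫ s in (0:ℝ)..t, a (x + s • dir φ) ≤ d * A := by
    intro φ t ht
    set u : ℝ → ℝ := fun s => a (x + s • dir φ) with hu
    have hum : Measurable u :=
      hameas.comp (continuous_const.add (continuous_id.smul continuous_const)).measurable
    have hub : ∀ s, |u s| ≤ A := fun s => habd _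
    have hu0 : ∀ s, d < s → u s = 0 := by
      intro s hs
      apply hasupp
      intro hK'
      have h1 := Metric.dist_le_diam_of_mem hK.isBounded hK' hx
      rw [hd, hdist s φ (by linarith)] at h1
      linarith
    have hui : ∀ t₁ t₂ : ℝ, IntervalIntegrable u volume t₁ t₂ := by
      intro t₁ t₂
      apply IntervalIntegrable.mono_fun (intervalIntegrable_const (c := A))
        hum.aestronglyMeasurable
      filter_upwards with s
      rw [Real.norm_eq_abs, Real.norm_eq_abs]
      exact (hub s).trans (le_abs_self A)
    have hmono : ∀ t' : ℝ, 0 ≤ t' → ∫ s in (0:ℝ)..t', u s ≤ t' * A := by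
      intro t' ht'
      calc ∫ s in (0:ℝ)..t', u s ≤ ∫ _ in (0:ℝ)..t', A := by
            apply intervalIntegral.integral_mono_on ht' (hui 0 t') intervalIntegrable_const
            intro s _
            exact (abs_le.1 (hub s)).2
        _ = t' * A := by simp
    rcases le_total t d with h | h
    · exact (hmono t ht.le).trans (mul_le_mul_of_nonneg_right h hA0)
    · have split : (∫ s in (0:ℝ)..d, u s) + ∫ s in d..t, u s = ∫ s in (0:ℝ)..t, u s :=
        intervalIntegral.integral_add_adjacent_intervals (hui 0 d) (hui d t)
      have h2 : ∫ s in d..t, u s = 0 := by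
        rw [intervalIntegral.integral_of_le h]
        rw [setIntegral_congr_fun measurableSet_Ioc (g := fun _ => (0:ℝ))
          (fun s hs => hu0 s hs.1)]
        simp
      have h1 := hmono d hdpos.le
      linarith
  -- the indicator of the ball
  set g : EuclideanSpace ℝ (Fin 2) → ℝ≥0∞ :=
    (Metric.ball xbar R).indicator (fun _ => 1) with hg
  have hgm : Measurable g := measurable_const.indicator measurableSet_ball
  set C : ℝ≥0∞ := ENNReal.ofReal (Real.exp (-(d * A)) * c / d) with hC
  -- pointwise bound
  have hbound : ∀ (φ t : ℝ),
      C * (ENNReal.ofReal t * g (x + t • dir φ)) ≤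
        ENNReal.ofReal (f (x + t • dir φ) *
          Real.exp (-∫ s in (0:ℝ)..t, a (x + s • dir φ))) := by
    intro φ t
    by_cases hy : x + t • dir φ ∈ Metric.ball xbar R
    · rcases le_or_gt t 0 with ht | ht
      · simp [ENNReal.ofReal_of_nonpos ht]
      · have hyK : x + t • dir φ ∈ K := hball hy
        have htd : t ≤ d := by
          have h1 := Metric.dist_le_diam_of_mem hK.isBounded hyK hx
          rwa [hd, hdist t φ ht.le] at h1
        have hg1 : g (x + t • dir φ) = 1 := by rw [hg, indicator_of_mem hy]
        rw [hg1, mul_one, hC, ← ENNReal.ofReal_mul (by positivity)]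
        apply ENNReal.ofReal_le_ofReal
        have step1 : Real.exp (-(d * A)) * c / d * t ≤ Real.exp (-(d * A)) * c := by
          rw [div_mul_eq_mul_div, div_le_iff₀ hdpos]
          have := mul_le_mul_of_nonneg_left htd (by positivity :
            (0:ℝ) ≤ Real.exp (-(d * A)) * c)
          linarith
        have step2 : Real.exp (-(d * A)) * c ≤
            f (x + t • dir φ) * Real.exp (-∫ s in (0:ℝ)..t, a (x + s • dir φ)) := by
          rw [mul_comm]
          apply mul_le_mul (hfball _ hy)
            (Real.exp_le_exp.2 (neg_le_neg (hI φ t ht))) (Real.exp_pos _).le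
          exact le_trans hc.le (hfball _ hy)
        linarith
    · have hg0 : g (x + t • dir φ) = 0 := by rw [hg, indicator_of_notMem hy]
      simp [hg0]
  -- volume of the ball
  have hvol : volume (Metric.ball xbar R) = ENNReal.ofReal R ^ 2 * ENNReal.ofReal π := by
    rw [EuclideanSpace.volume_ball]
    simp only [Fintype.card_fin]
    norm_num [Real.Gamma_two, Real.sq_sqrt Real.pi_pos.le]
  calc
    ENNReal.ofReal (Real.exp (-(d * A)) * c * π * R ^ 2 / d)
        = C * volume (Metric.ball xbar R) := by
      rw [hvol, hC, ← ENNReal.ofReal_pow hR.le, ← ENNReal.ofReal_mul (by positivity),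
        ← ENNReal.ofReal_mul (by positivity)]
      congr 1
      field_simp
    _ = C * ∫⁻ φ in Ioc 0 (2*π), ∫⁻ t in Ioi (0:ℝ),
          ENNReal.ofReal t * g (x + t • dir φ) := by
      rw [polar_lintegral g hgm x]
      congr 1
      rw [hg]
      rw [lintegral_indicator measurableSet_ball]
      simp
    _ = ∫⁻ φ in Ioc 0 (2*π), ∫⁻ t in Ioi (0:ℝ),
          C * (ENNReal.ofReal t * g (x + t • dir φ)) := by
      rw [← lintegral_const_mul' C _ ENNReal.ofReal_ne_top]
      apply lintegral_congr
      intro φ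
      rw [← lintegral_const_mul' C _ ENNReal.ofReal_ne_top]
    _ ≤ Mop a f x := by
      rw [Mop]
      exact lintegral_mono fun φ => lintegral_mono fun t => hbound φ t
end

section
/- Let ε > 0 and let h : ℝ² → ℝ be continuous with h ≥ 0, h(x) = 0 for |x| > ε, and m = ∫_{ℝ²} h > 0. Let K' ⊆ ℝ² be a bounded measurable set with Lebesgue measure λ(K') > 0, and let 𝒫 be a countable measurable partition of K' such that every P ∈ 𝒫 contains a closed ball of radius 2ε. Let g = Σ_{P ∈ 𝒫} c_P 1_P with real coefficients c_P and g ∈ L²(ℝ²) (g is defined to be 0 outside K'). Then ‖h * g‖_{L²(ℝ²)} ≥ m ε (π / λ(K'))^{1/2} ‖g‖_{L²(ℝ²)}. -/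
open MeasureTheory Real Set
open scoped ENNReal

lemma sqnorm12 (r : ℝ) : (‖r‖₊ : ℝ≥0∞) ^ (2:ℝ) = ENNReal.ofReal (r ^ 2) := by
  have h2 : ((‖r‖₊ : ℝ≥0∞)) ^ (2:ℝ) = ((‖r‖₊ : ℝ≥0∞)) ^ (2:ℕ) := by
    rw [← ENNReal.rpow_natCast]; norm_num
  rw [h2, ← ENNReal.coe_pow, ← nnnorm_pow, ← enorm_eq_nnnorm, Real.enorm_eq_ofReal (sq_nonneg r)]

lemma ball_vol (x : EuclideanSpace ℝ (Fin 2)) (r : ℝ) (hr : 0 ≤ r) :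
    volume (Metric.ball x r) = ENNReal.ofReal (r ^ 2 * π) := by
  rw [EuclideanSpace.volume_ball]
  have h2 : (1:ℝ) + 1 = 2 := by norm_num
  simp only [Fintype.card_fin, pow_two, Nat.cast_ofNat, h2, div_one, Real.sq_sqrt pi_nonneg]
  rw [← ENNReal.ofReal_mul hr, ← ENNReal.ofReal_mul (mul_nonneg hr hr)]
  ring_nf
  rw [Real.Gamma_two]
  ring_nf

/-- Lower bound for the convolution of a nonnegative bump `h` (supported in the ball of
radius `ε`, with mass `m = ∫ h > 0`) against a piecewise-constant function `g` built from
a countable measurable partition of `K'` whose pieces each contain a closed ball of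
radius `2ε`: `‖h * g‖_{L²} ≥ m ε (π / λ(K'))^{1/2} ‖g‖_{L²}`. -/
theorem stmt12 (ε : ℝ) (hε : 0 < ε)
    (h : EuclideanSpace ℝ (Fin 2) → ℝ) (hcont : Continuous h)
    (h0 : ∀ x, 0 ≤ h x) (hsupp : ∀ x : EuclideanSpace ℝ (Fin 2), ε < ‖x‖ → h x = 0)
    (hm : 0 < ∫ x, h x)
    (K' : Set (EuclideanSpace ℝ (Fin 2))) (hK'bdd : Bornology.IsBounded K')
    (hK'meas : MeasurableSet K') (hK'pos : 0 < volume K')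
    (ι : Type) [Countable ι] (P : ι → Set (EuclideanSpace ℝ (Fin 2)))
    (hPmeas : ∀ i, MeasurableSet (P i))
    (hPdisj : Pairwise (Function.onFun Disjoint P))
    (hPunion : (⋃ i, P i) = K')
    (hPball : ∀ i, ∃ z, Metric.closedBall z (2 * ε) ⊆ P i)
    (c : ι → ℝ)
    (g : EuclideanSpace ℝ (Fin 2) → ℝ)
    (hg : g = fun x => ∑' i, c i * (P i).indicator (fun _ => (1 : ℝ)) x)
    (hgL2 : MemLp g 2 volume) :
    ENNReal.ofReal ((∫ x, h x) * ε * Real.sqrt (π / (volume K').toReal)) *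
        eLpNorm g 2 volume ≤
      eLpNorm (fun x => ∫ y, h (x - y) * g y) 2 volume := by
  set m : ℝ := ∫ x, h x with hmdef
  set V : ℝ≥0∞ := volume K' with hVdef
  have hVfin : V ≠ ∞ := hK'bdd.measure_lt_top.ne
  have hVreal : 0 < V.toReal := ENNReal.toReal_pos hK'pos.ne' hVfin
  choose z hz using hPball
  -- g equals c i on P i
  have hgP : ∀ i, ∀ y ∈ P i, g y = c i := by
    intro i y hy
    rw [hg]
    show (∑' j, c j * (P j).indicator (fun _ => (1:ℝ)) y) = c i
    have : ∀ j, j ≠ i → c j * (P j).indicator (fun _ => (1:ℝ)) y = 0 := by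
      intro j hj
      have : y ∉ P j := fun hyj => (Set.disjoint_left.mp (hPdisj hj) hyj) hy
      simp [Set.indicator_of_notMem this]
    rw [tsum_eq_single i this]
    simp [Set.indicator_of_mem hy]
  have hg0 : ∀ y, y ∉ K' → g y = 0 := by
    intro y hy
    rw [hg]
    show (∑' j, c j * (P j).indicator (fun _ => (1:ℝ)) y) = 0
    have : ∀ j, c j * (P j).indicator (fun _ => (1:ℝ)) y = 0 := by
      intro j
      have : y ∉ P j := fun hyj => hy (hPunion ▸ Set.mem_iUnion.mpr ⟨j, hyj⟩)
      simp [Set.indicator_of_notMem this]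
    simp [this, tsum_zero]
  -- convolution value on small balls
  have conv_eq : ∀ i, ∀ x ∈ Metric.ball (z i) ε, (∫ y, h (x - y) * g y) = c i * m := by
    intro i x hx
    have hpt : ∀ y, h (x - y) * g y = c i * h (x - y) := by
      intro y
      by_cases hy : h (x - y) = 0
      · simp [hy]
      · have hle : ‖x - y‖ ≤ ε := le_of_not_gt fun hlt => hy (hsupp _ hlt)
        have hyP : y ∈ P i := by
          apply hz i
          rw [Metric.mem_closedBall]
          calc dist y (z i) ≤ dist y x + dist x (z i) := dist_triangle _ _ _
            _ ≤ ε + ε := by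
                refine add_le_add ?_ (le_of_lt (Metric.mem_ball.mp hx))
                rw [dist_eq_norm, ← norm_neg]
                simpa [neg_sub] using hle
            _ = 2 * ε := by ring
        rw [hgP i y hyP]; ring
    simp_rw [hpt]
    rw [integral_const_mul, integral_sub_left_eq_self h volume x]
  set C : ℝ≥0∞ := ENNReal.ofReal (m * ε * Real.sqrt (π / V.toReal)) with hCdef
  set F : EuclideanSpace ℝ (Fin 2) → ℝ := fun x => ∫ y, h (x - y) * g y with hFdef
  set s : ℝ := Real.sqrt (π / V.toReal) with hsdef
  have hsnn : 0 ≤ s := Real.sqrt_nonneg _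
  have hss : s * s = π / V.toReal := Real.mul_self_sqrt (by positivity)
  -- lintegral of ‖g‖² equals sum
  have hA : (∫⁻ x, (‖g x‖₊ : ℝ≥0∞) ^ (2:ℝ)) = ∑' i, ENNReal.ofReal ((c i)^2) * volume (P i) := by
    rw [← lintegral_add_compl (fun x => (‖g x‖₊ : ℝ≥0∞) ^ (2:ℝ)) hK'meas]
    have h1 : (∫⁻ x in K'ᶜ, (‖g x‖₊ : ℝ≥0∞) ^ (2:ℝ)) = 0 := by
      rw [setLIntegral_congr_fun (g := fun _ => (0:ℝ≥0∞)) hK'meas.compl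
        (fun y hy => by simp only [sqnorm12, hg0 y hy]; simp)]
      simp
    rw [h1, add_zero, ← hPunion, lintegral_iUnion hPmeas hPdisj]
    congr 1
    ext i
    rw [setLIntegral_congr_fun (hPmeas i)
      (fun y hy => by rw [hgP i y hy, sqnorm12]), setLIntegral_const]
  -- small balls are inside the pieces
  have hball_sub : ∀ i, Metric.ball (z i) ε ⊆ P i := fun i =>
    (Metric.ball_subset_closedBall.trans
      (Metric.closedBall_subset_closedBall (by linarith))).trans (hz i)
  have hballdisj : Pairwise (Function.onFun Disjoint fun i => Metric.ball (z i) ε) :=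
    fun i j hij => (hPdisj hij).mono (hball_sub i) (hball_sub j)
  -- lower bound for the convolution lintegral
  have hBq : (∑' i, ENNReal.ofReal ((c i * m)^2) * ENNReal.ofReal (ε^2 * π))
      ≤ ∫⁻ x, (‖F x‖₊ : ℝ≥0∞) ^ (2:ℝ) := by
    have hBs : ∀ i, (∫⁻ x in Metric.ball (z i) ε, (‖F x‖₊ : ℝ≥0∞) ^ (2:ℝ))
        = ENNReal.ofReal ((c i * m)^2) * ENNReal.ofReal (ε^2 * π) := by
      intro i
      rw [setLIntegral_congr_fun (g := fun _ => ENNReal.ofReal ((c i * m)^2))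
        measurableSet_ball
        (fun x hx => by simp only [hFdef, conv_eq i x hx, sqnorm12]),
        setLIntegral_const, ball_vol _ _ hε.le]
    calc (∑' i, ENNReal.ofReal ((c i * m)^2) * ENNReal.ofReal (ε^2 * π))
        = ∫⁻ x in ⋃ i, Metric.ball (z i) ε, (‖F x‖₊ : ℝ≥0∞) ^ (2:ℝ) := by
          rw [lintegral_iUnion (fun i => measurableSet_ball) hballdisj]
          exact (tsum_congr hBs).symm
      _ ≤ ∫⁻ x, (‖F x‖₊ : ℝ≥0∞) ^ (2:ℝ) := setLIntegral_le_lintegral _ _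
  -- termwise comparison
  have hterm : ∀ i, C ^ (2:ℝ) * (ENNReal.ofReal ((c i)^2) * V)
      = ENNReal.ofReal ((c i * m)^2) * ENNReal.ofReal (ε^2 * π) := by
    intro i
    have hCnn : 0 ≤ m * ε * s := by positivity
    have hC2 : C ^ (2:ℝ) = ENNReal.ofReal ((m * ε * s) * (m * ε * s)) := by
      have : C ^ (2:ℝ) = C ^ (2:ℕ) := by rw [← ENNReal.rpow_natCast]; norm_num
      rw [this, sq, hCdef, ← ENNReal.ofReal_mul hCnn]
    have hVor : V = ENNReal.ofReal V.toReal := (ENNReal.ofReal_toReal hVfin).symm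
    rw [hC2, hVor, ← ENNReal.ofReal_mul (sq_nonneg (c i)),
      ← ENNReal.ofReal_mul (mul_nonneg hCnn hCnn),
      ← ENNReal.ofReal_mul (sq_nonneg (c i * m))]
    congr 1
    have h2 : s * s * V.toReal = π := by rw [hss, div_mul_cancel₀ _ hVreal.ne']
    calc (m * ε * s) * (m * ε * s) * ((c i)^2 * V.toReal)
        = (c i)^2 * m^2 * ε^2 * (s * s * V.toReal) := by ring
      _ = (c i * m)^2 * (ε^2 * π) := by rw [h2]; ring
  -- key squared inequality
  have key : C ^ (2:ℝ) * (∫⁻ x, (‖g x‖₊ : ℝ≥0∞) ^ (2:ℝ))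
      ≤ ∫⁻ x, (‖F x‖₊ : ℝ≥0∞) ^ (2:ℝ) := by
    calc C ^ (2:ℝ) * (∫⁻ x, (‖g x‖₊ : ℝ≥0∞) ^ (2:ℝ))
        = ∑' i, C ^ (2:ℝ) * (ENNReal.ofReal ((c i)^2) * volume (P i)) := by
          rw [hA, ENNReal.tsum_mul_left]
      _ ≤ ∑' i, C ^ (2:ℝ) * (ENNReal.ofReal ((c i)^2) * V) := by
          refine ENNReal.tsum_le_tsum fun i => ?_
          gcongr
          exact measure_mono (hPunion ▸ Set.subset_iUnion P i)
      _ = ∑' i, ENNReal.ofReal ((c i * m)^2) * ENNReal.ofReal (ε^2 * π) := tsum_congr hterm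
      _ ≤ _ := hBq
  -- conclude by taking square roots
  rw [eLpNorm_eq_lintegral_rpow_enorm_toReal (by norm_num) (by norm_num),
    eLpNorm_eq_lintegral_rpow_enorm_toReal (by norm_num) (by norm_num)]
  simp only [ENNReal.toReal_ofNat]
  calc C * (∫⁻ x, (‖g x‖₊ : ℝ≥0∞) ^ (2:ℝ)) ^ (1/(2:ℝ))
      = (C ^ (2:ℝ) * (∫⁻ x, (‖g x‖₊ : ℝ≥0∞) ^ (2:ℝ))) ^ (1/(2:ℝ)) := by
        rw [ENNReal.mul_rpow_of_nonneg _ _ (by norm_num : (0:ℝ) ≤ 1/2),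
          ← ENNReal.rpow_mul]
        norm_num
    _ ≤ (∫⁻ x, (‖F x‖₊ : ℝ≥0∞) ^ (2:ℝ)) ^ (1/(2:ℝ)) :=
        ENNReal.rpow_le_rpow key (by norm_num)
end
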